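/- Let J1, I22, I33, I23 be real numbers with J1 > 0, I22 > 0, I23 ≠ 0, and set J2 = ½(I22+I33) + ½√((I22−I33)²+4I23²), J3 = ½(I22+I33) − ½√((I22−I33)²+4I23²). Then for every constant c0 ∈ ℝ, the curve ω2(τ) = (J1 − I33)/I23, ω1(τ) = −((J1 − J2)(J1 − J3)/(I23 J1)) τ + c0 is a solution of the system J1 ω1' = −I23 ω2² + (I22 − I33) ω2 + I23, I22 ω2' = ω1 (I23 ω2 + I33 − J1). -/

import Mathlib

/-- The explicit particular solution of the reduced inhomogeneous Suslov problem along the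
invariant horizontal line `ω2 = (J1 − I33)/I23`. -/
theorem suslov_particular_solution
    (J1 I22 I33 I23 J2 J3 : ℝ)
    (hJ1 : 0 < J1) (hI22 : 0 < I22) (hI23 : I23 ≠ 0)
    (hJ2 : J2 = (I22 + I33) / 2 + Real.sqrt ((I22 - I33) ^ 2 + 4 * I23 ^ 2) / 2)
    (hJ3 : J3 = (I22 + I33) / 2 - Real.sqrt ((I22 - I33) ^ 2 + 4 * I23 ^ 2) / 2)
    (c0 : ℝ) (ω1 ω2 : ℝ → ℝ)
    (hω1def : ω1 = fun τ : ℝ => -((J1 - J2) * (J1 - J3) / (I23 * J1)) * τ + c0)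
    (hω2def : ω2 = fun _ : ℝ => (J1 - I33) / I23) :
    ∀ τ : ℝ,
      HasDerivAt ω1 ((-I23 * (ω2 τ) ^ 2 + (I22 - I33) * ω2 τ + I23) / J1) τ ∧
      HasDerivAt ω2 (ω1 τ * (I23 * ω2 τ + I33 - J1) / I22) τ := by
  have hs := Real.sq_sqrt (by positivity : (0:ℝ) ≤ (I22 - I33) ^ 2 + 4 * I23 ^ 2)
  have key : (J1 - J2) * (J1 - J3) = (J1 - I22) * (J1 - I33) - I23 ^ 2 := by
    subst hJ2 hJ3; nlinarith [hs]
  intro τ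
  constructor
  · have h1 : HasDerivAt ω1 (-((J1 - J2) * (J1 - J3) / (I23 * J1))) τ := by
      rw [hω1def]
      simpa using ((hasDerivAt_id τ).const_mul
        (-((J1 - J2) * (J1 - J3) / (I23 * J1)))).add_const c0
    convert h1 using 1
    rw [hω2def, key]
    field_simp
    ring
  · have h2 : HasDerivAt ω2 0 τ := by rw [hω2def]; exact hasDerivAt_const τ _
    convert h2 using 1
    rw [hω2def]
    field_simp
    ring
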